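/- Let K be a nonempty finite set (the parties) and for each k ∈ K let d_k ≥ 1, let A_k (outcomes) and X_k (settings) be nonempty finite sets. For each k ∈ K, x ∈ X_k, a ∈ A_k let M_{k,a}^x be a positive semidefinite d_k×d_k complex matrix, and set M_{k,✓}^x := Σ_{a∈A_k} M_{k,a}^x, assuming M_{k,✓}^x ≼ 𝟙. Assume fair sampling: there exist reals e_k(x) > 0 and positive definite matrices Q_k with Q_k ≼ 𝟙 such that M_{k,✓}^x = e_k(x) • Q_k for all k ∈ K and x ∈ X_k. Let Ψ be a density matrix on the tensor-product space indexed by Π_{k∈K} Fin(d_k). Define the filtered state Ψ_✓ := (⊗_{k∈K} √Q_k) Ψ (⊗_{k∈K} √Q_k) / Tr((⊗_{k∈K} Q_k) Ψ), where √Q_k is the positive semidefinite square root (the denominator is strictly positive), and for each k, x, a define M̄_{k,a}^x := e_k(x)⁻¹ • (Q_k^{-1/2} M_{k,a}^x Q_k^{-1/2}). Then: (a) Σ_{a∈A_k} M̄_{k,a}^x = 𝟙 for every k and x, so each (M̄_{k,a}^x)_{a∈A_k} is a lossless POVM; and (b) for every tuple of settings x̄ ∈ Π_k X_k and every tuple of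 outcomes ā ∈ Π_k A_k, the post-selected probability equals the ideal probability: Tr((⊗_{k∈K} M_{k,ā(k)}^{x̄(k)}) Ψ) / Tr((⊗_{k∈K} M_{k,✓}^{x̄(k)}) Ψ) = Tr((⊗_{k∈K} M̄_{k,ā(k)}^{x̄(k)}) Ψ_✓). -/

import Mathlib

open scoped ComplexOrder

/-- The positive semidefinite square root of a positive semidefinite matrix (as in the older Mathlib). -/
noncomputable def Matrix.PosSemidef.sqrt {n : Type*} [Fintype n] [DecidableEq n]
    {A : Matrix n n ℂ} (hA : A.PosSemidef) : Matrix n n ℂ :=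
  hA.1.eigenvectorUnitary.1 * Matrix.diagonal ((↑) ∘ (Real.sqrt ·) ∘ hA.1.eigenvalues) *
    (star hA.1.eigenvectorUnitary : Matrix n n ℂ)

lemma Matrix.PosSemidef.posSemidef_sqrt {n : Type*} [Fintype n] [DecidableEq n]
    {A : Matrix n n ℂ} (hA : A.PosSemidef) : hA.sqrt.PosSemidef := by
  unfold Matrix.PosSemidef.sqrt
  have hD : (Matrix.diagonal ((↑) ∘ (Real.sqrt ·) ∘ hA.1.eigenvalues : n → ℂ)).PosSemidef :=
    Matrix.posSemidef_diagonal_iff.mpr fun i => by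
      simp only [Function.comp_apply]
      exact_mod_cast Real.sqrt_nonneg _
  have := hD.mul_mul_conjTranspose_same (hA.1.eigenvectorUnitary.1)
  simpa [Matrix.star_eq_conjTranspose] using this

lemma Matrix.PosSemidef.sqrt_mul_self {n : Type*} [Fintype n] [DecidableEq n]
    {A : Matrix n n ℂ} (hA : A.PosSemidef) : hA.sqrt * hA.sqrt = A := by
  unfold Matrix.PosSemidef.sqrt
  have hU : (star hA.1.eigenvectorUnitary : Matrix n n ℂ) * hA.1.eigenvectorUnitary.1 = 1 :=
    Unitary.star_mul_self_of_mem hA.1.eigenvectorUnitary.2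
  have hDD : Matrix.diagonal ((↑) ∘ (Real.sqrt ·) ∘ hA.1.eigenvalues : n → ℂ) *
      Matrix.diagonal ((↑) ∘ (Real.sqrt ·) ∘ hA.1.eigenvalues : n → ℂ) =
      Matrix.diagonal (RCLike.ofReal ∘ hA.1.eigenvalues) := by
    rw [Matrix.diagonal_mul_diagonal]
    congr 1
    funext i
    simp only [Function.comp_apply]
    rw [← Complex.ofReal_mul, Real.mul_self_sqrt (hA.eigenvalues_nonneg i)]
    rfl
  conv_rhs => rw [hA.1.spectral_theorem]
  simp only [Matrix.mul_assoc]
  rw [← Matrix.mul_assoc (star _ : Matrix n n ℂ) hA.1.eigenvectorUnitary.1, hU, Matrix.one_mul,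
    ← Matrix.mul_assoc (Matrix.diagonal _) (Matrix.diagonal _), hDD]
  simp [Unitary.conjStarAlgAut_apply, Matrix.mul_assoc]

/-- The tensor product `⊗_{k∈K} A_k`, indexed by tuples in `Π_{k∈K} Fin (d k)`. -/
noncomputable def tensorProd {K : Type*} [Fintype K] {d : K → ℕ}
    (A : ∀ k, Matrix (Fin (d k)) (Fin (d k)) ℂ) :
    Matrix (∀ k, Fin (d k)) (∀ k, Fin (d k)) ℂ :=
  fun f g => ∏ k, A k (f k) (g k)

open Matrix
section Aux
variable {K : Type*} [Fintype K] [DecidableEq K] {d : K → ℕ}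

lemma tensorProd_mul (A B : ∀ k, Matrix (Fin (d k)) (Fin (d k)) ℂ) :
    tensorProd A * tensorProd B = tensorProd (fun k => A k * B k) := by
  ext f g
  simp only [tensorProd, Matrix.mul_apply, Finset.prod_univ_sum, Fintype.piFinset_univ,
    ← Finset.prod_mul_distrib]

lemma tensorProd_one : tensorProd (fun k => (1 : Matrix (Fin (d k)) (Fin (d k)) ℂ)) = 1 := by
  ext f g
  simp only [tensorProd, Matrix.one_apply]
  by_cases h : f = g
  · simp [h]
  · obtain ⟨k, hk⟩ := Function.ne_iff.mp h
    rw [if_neg h]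
    exact Finset.prod_eq_zero (Finset.mem_univ k) (by simp [Matrix.one_apply, hk])

lemma tensorProd_smul (c : K → ℂ) (A : ∀ k, Matrix (Fin (d k)) (Fin (d k)) ℂ) :
    tensorProd (fun k => c k • A k) = (∏ k, c k) • tensorProd A := by
  ext f g
  simp [tensorProd, Matrix.smul_apply, smul_eq_mul, Finset.prod_mul_distrib]

lemma tensorProd_isHermitian (A : ∀ k, Matrix (Fin (d k)) (Fin (d k)) ℂ)
    (h : ∀ k, (A k).IsHermitian) : (tensorProd A).IsHermitian := by
  ext f g
  simp only [tensorProd, Matrix.conjTranspose_apply]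
  rw [show (star (∏ k, A k (g k) (f k)) : ℂ) = ∏ k, star (A k (g k) (f k)) from
    map_prod (starRingEnd ℂ) _ _]
  exact Finset.prod_congr rfl fun k _ => (h k).apply _ _

lemma trace_conjTranspose_mul_self_re_pos {n : Type*} [Fintype n] [DecidableEq n]
    {B : Matrix n n ℂ} (hB : B ≠ 0) : 0 < (Matrix.trace (Bᴴ * B)).re := by
  have h1 : (Matrix.trace (Bᴴ * B)).re = ∑ i, ∑ j, Complex.normSq (B j i) := by
    simp only [Matrix.trace, Matrix.diag, Matrix.mul_apply, Matrix.conjTranspose_apply]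
    rw [Complex.re_sum]
    refine Finset.sum_congr rfl fun i _ => ?_
    rw [Complex.re_sum]
    refine Finset.sum_congr rfl fun j _ => ?_
    rw [show (star (B j i) * B j i : ℂ) = Complex.normSq (B j i) by
      rw [Complex.star_def, mul_comm, Complex.mul_conj]]
    simp
  rw [h1]
  obtain ⟨j, i, hji⟩ : ∃ j i, B j i ≠ 0 := by
    by_contra h
    push_neg at h
    exact hB (by ext j i; simpa using h j i)
  have : 0 < Complex.normSq (B j i) := Complex.normSq_pos.mpr hji
  refine Finset.sum_pos' (fun i _ => Finset.sum_nonneg fun j _ => Complex.normSq_nonneg _)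
    ⟨i, Finset.mem_univ _, Finset.sum_pos' (fun j _ => Complex.normSq_nonneg _)
      ⟨j, Finset.mem_univ _, this⟩⟩

end Aux

/-- Multipartite fair sampling. If each party's success element factorizes as
`M_{k,✓}^x = e_k(x) • Q_k` with `e_k(x) > 0` and `0 ≺ Q_k ≼ 𝟙`, then (the filtering probability
`Tr((⊗_k Q_k) Ψ)` is strictly positive,) the rescaled conjugated POVMs
`M̄_{k,a}^x = e_k(x)⁻¹ • (Q_k^{-1/2} M_{k,a}^x Q_k^{-1/2})` are lossless, and the post-selected
statistics of the lossy devices on `Ψ` equal the statistics of the lossless devices on the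
filtered state `Ψ_✓ = (⊗_k √Q_k) Ψ (⊗_k √Q_k) / Tr((⊗_k Q_k) Ψ)`. -/
theorem multipartite_fair_sampling_postselected_eq_lossless_on_filtered_state
    (K : Type*) [Fintype K] [DecidableEq K] [Nonempty K]
    (d : K → ℕ) (hd : ∀ k, 1 ≤ d k)
    (A X : K → Type*) [∀ k, Fintype (A k)] [∀ k, Nonempty (A k)]
    [∀ k, Fintype (X k)] [∀ k, Nonempty (X k)]
    (M : ∀ k, X k → A k → Matrix (Fin (d k)) (Fin (d k)) ℂ)
    (hMpsd : ∀ k x a, (M k x a).PosSemidef)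
    (hMle : ∀ k x, ((1 : Matrix (Fin (d k)) (Fin (d k)) ℂ) - ∑ a, M k x a).PosSemidef)
    (e : ∀ k, X k → ℝ) (he : ∀ k x, 0 < e k x)
    (Q : ∀ k, Matrix (Fin (d k)) (Fin (d k)) ℂ)
    (hQ : ∀ k, (Q k).PosDef)
    (hQle : ∀ k, ((1 : Matrix (Fin (d k)) (Fin (d k)) ℂ) - Q k).PosSemidef)
    (hfac : ∀ k x, ∑ a, M k x a = (e k x : ℂ) • Q k)
    (Ψ : Matrix (∀ k, Fin (d k)) (∀ k, Fin (d k)) ℂ)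
    (hΨ : Ψ.PosSemidef) (hΨtr : Ψ.trace = 1) :
    0 < (Matrix.trace (tensorProd Q * Ψ)).re ∧
    (∀ k x, ∑ a, (e k x : ℂ)⁻¹ •
        (((hQ k).posSemidef.sqrt)⁻¹ * M k x a * ((hQ k).posSemidef.sqrt)⁻¹) =
      (1 : Matrix (Fin (d k)) (Fin (d k)) ℂ)) ∧
    ∀ (xb : ∀ k, X k) (ab : ∀ k, A k),
      Matrix.trace (tensorProd (fun k => M k (xb k) (ab k)) * Ψ) /
          Matrix.trace (tensorProd (fun k => ∑ a, M k (xb k) a) * Ψ) =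
        Matrix.trace
          (tensorProd (fun k => (e k (xb k) : ℂ)⁻¹ •
              (((hQ k).posSemidef.sqrt)⁻¹ * M k (xb k) (ab k) * ((hQ k).posSemidef.sqrt)⁻¹)) *
            ((Matrix.trace (tensorProd Q * Ψ))⁻¹ •
              (tensorProd (fun k => (hQ k).posSemidef.sqrt) * Ψ *
                tensorProd (fun k => (hQ k).posSemidef.sqrt)))) := by
  set S : ∀ k, Matrix (Fin (d k)) (Fin (d k)) ℂ := fun k => ((hQ k).posSemidef).sqrt with hSdef
  simp only [show ∀ k, ((hQ k).posSemidef).sqrt = S k from fun _ => rfl]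
  have hSps : ∀ k, (S k).PosSemidef := fun k => (hQ k).posSemidef.posSemidef_sqrt
  have hSS : ∀ k, S k * S k = Q k := fun k => (hQ k).posSemidef.sqrt_mul_self
  have hdetQ : ∀ k, IsUnit (Q k).det := fun k => (Matrix.isUnit_iff_isUnit_det _).mp (hQ k).isUnit
  have hdetS : ∀ k, IsUnit (S k).det := by
    intro k
    have h : (S k).det * (S k).det = (Q k).det := by rw [← Matrix.det_mul, hSS]
    exact (IsUnit.mul_iff.mp (h ▸ hdetQ k)).1
  have hinv1 : ∀ k, (S k)⁻¹ * S k = 1 := fun k => Matrix.nonsing_inv_mul _ (hdetS k)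
  have hinv2 : ∀ k, S k * (S k)⁻¹ = 1 := fun k => Matrix.mul_nonsing_inv _ (hdetS k)
  set T := tensorProd (fun k => S k) with hTdef
  set T' := tensorProd (fun k => (S k)⁻¹) with hT'def
  have hTT' : T * T' = 1 := by
    rw [hTdef, hT'def, tensorProd_mul]; simp only [hinv2]; exact tensorProd_one
  have hT'T : T' * T = 1 := by
    rw [hTdef, hT'def, tensorProd_mul]; simp only [hinv1]; exact tensorProd_one
  have hTQ : T * T = tensorProd Q := by
    rw [hTdef, tensorProd_mul]; exact congrArg tensorProd (funext hSS)
  have hTherm : T.IsHermitian := tensorProd_isHermitian _ (fun k => (hSps k).1)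
  set c := Matrix.trace (tensorProd Q * Ψ) with hcdef
  -- positivity of the filter probability
  have hΨne : Ψ ≠ 0 := by intro h; rw [h, Matrix.trace_zero] at hΨtr; exact one_ne_zero hΨtr.symm
  set R := hΨ.sqrt with hRdef
  have hRR : R * R = Ψ := hΨ.sqrt_mul_self
  have hRherm : R.IsHermitian := hΨ.posSemidef_sqrt.1
  have hRTne : R * T ≠ 0 := by
    intro h
    have hR0 : R = 0 := by
      calc R = R * (T * T') := by rw [hTT', mul_one]
        _ = (R * T) * T' := by rw [mul_assoc]
        _ = 0 := by rw [h, zero_mul]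
    exact hΨne (by rw [← hRR, hR0, mul_zero])
  have hkey : c = Matrix.trace ((R * T)ᴴ * (R * T)) := by
    have h1 : (R * T)ᴴ * (R * T) = T * Ψ * T := by
      rw [Matrix.conjTranspose_mul, hTherm.eq, hRherm.eq, ← hRR]
      noncomm_ring
    rw [h1, hcdef, ← hTQ]
    exact (Matrix.trace_mul_cycle T Ψ T).symm
  have hpos : 0 < c.re := by
    rw [hkey]; exact trace_conjTranspose_mul_self_re_pos hRTne
  have hcne : c ≠ 0 := by intro h; rw [h] at hpos; simp at hpos
  -- part 2
  have part2 : ∀ k x, ∑ a, (e k x : ℂ)⁻¹ • ((S k)⁻¹ * M k x a * (S k)⁻¹) =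
      (1 : Matrix (Fin (d k)) (Fin (d k)) ℂ) := by
    intro k x
    have hsum : ∑ a, (S k)⁻¹ * M k x a * (S k)⁻¹ = (e k x : ℂ) • 1 := by
      calc ∑ a, (S k)⁻¹ * M k x a * (S k)⁻¹
          = (S k)⁻¹ * (∑ a, M k x a) * (S k)⁻¹ := by
            rw [Finset.mul_sum, Finset.sum_mul]
        _ = (e k x : ℂ) • ((S k)⁻¹ * Q k * (S k)⁻¹) := by
            rw [hfac k x, Matrix.mul_smul, Matrix.smul_mul]
        _ = (e k x : ℂ) • 1 := by
            rw [← hSS k, ← mul_assoc, hinv1, one_mul, hinv2]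
    rw [← Finset.smul_sum, hsum, smul_smul,
      inv_mul_cancel₀ (by exact_mod_cast (he k x).ne' : (e k x : ℂ) ≠ 0), one_smul]
  refine ⟨hpos, part2, ?_⟩
  -- part 3
  intro xb ab
  set tM := tensorProd (fun k => M k (xb k) (ab k)) with htM
  set E : ℂ := ∏ k, (e k (xb k) : ℂ) with hEdef
  have hden : Matrix.trace (tensorProd (fun k => ∑ a, M k (xb k) a) * Ψ) = E * c := by
    have h1 : tensorProd (fun k => ∑ a, M k (xb k) a) = E • tensorProd Q := by
      rw [show (fun k => ∑ a, M k (xb k) a) = fun k => (e k (xb k) : ℂ) • Q k from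
        funext fun k => hfac k (xb k), tensorProd_smul, hEdef]
    rw [h1, Matrix.smul_mul, Matrix.trace_smul, smul_eq_mul, hcdef]
  have hfac3 : tensorProd (fun k => (e k (xb k) : ℂ)⁻¹ •
      ((S k)⁻¹ * M k (xb k) (ab k) * (S k)⁻¹)) = E⁻¹ • (T' * tM * T') := by
    rw [tensorProd_smul]
    congr 1
    · rw [hEdef, ← Finset.prod_inv_distrib]
    · rw [hT'def, htM, tensorProd_mul, tensorProd_mul]
  have hcyc : Matrix.trace (T' * tM * T' * (T * Ψ * T)) = Matrix.trace (tM * Ψ) := by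
    have h1 : T' * tM * T' * (T * Ψ * T) = T' * (tM * (Ψ * T)) := by
      calc T' * tM * T' * (T * Ψ * T) = T' * (tM * ((T' * T) * (Ψ * T))) := by noncomm_ring
        _ = T' * (tM * (Ψ * T)) := by rw [hT'T, one_mul]
    rw [h1, Matrix.trace_mul_comm]
    calc Matrix.trace (tM * (Ψ * T) * T') = Matrix.trace (tM * (Ψ * (T * T'))) := by
          rw [mul_assoc, mul_assoc]
      _ = Matrix.trace (tM * Ψ) := by rw [hTT', mul_one]
  rw [hden, hfac3, Matrix.smul_mul, Matrix.mul_smul, Matrix.trace_smul, Matrix.trace_smul, hcyc,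
    smul_eq_mul, smul_eq_mul, div_eq_mul_inv, mul_inv]
  ring
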